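/- (Hales' inequality) For every pair of finite simple graphs G and H, σ(G ⊠ H) ≥ α*(G) · σ(H), where σ denotes the clique covering number. -/

import Mathlib

open Finset

namespace SimpleGraph

variable {V W : Type*}

/-- The strong graph product. -/
def strongProd (G : SimpleGraph V) (H : SimpleGraph W) : SimpleGraph (V × W) where
  Adj x y := x ≠ y ∧ (x.1 = y.1 ∨ G.Adj x.1 y.1) ∧ (x.2 = y.2 ∨ H.Adj x.2 y.2)
  symm := ⟨by
    rintro x y ⟨hne, h1, h2⟩
    exact ⟨hne.symm, h1.imp Eq.symm (fun h => G.adj_symm h), h2.imp Eq.symm (fun h => H.adj_symm h)⟩⟩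
  loopless := ⟨by rintro x ⟨hne, -, -⟩; exact hne rfl⟩

/-- The disjunctive graph product. -/
def disjProd (G : SimpleGraph V) (H : SimpleGraph W) : SimpleGraph (V × W) where
  Adj x y := G.Adj x.1 y.1 ∨ H.Adj x.2 y.2
  symm := ⟨by rintro _ _ h; exact h.imp (fun h => G.adj_symm h) (fun h => H.adj_symm h)⟩
  loopless := ⟨by rintro x h; exact h.elim (fun h => G.irrefl h) (fun h => H.irrefl h)⟩

/-- A finite set of vertices is independent if no two of its members are adjacent. -/
def IsIndep (G : SimpleGraph V) (s : Finset V) : Prop :=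
  ∀ ⦃v⦄, v ∈ s → ∀ ⦃w⦄, w ∈ s → ¬ G.Adj v w

/-- The independence number. -/
noncomputable def alpha (G : SimpleGraph V) [Fintype V] : ℕ :=
  sSup {n | ∃ s : Finset V, G.IsIndep s ∧ s.card = n}

/-- The fractional packing number. -/
noncomputable def alphaStar (G : SimpleGraph V) [Fintype V] : ℝ :=
  sSup {x | ∃ t : V → ℝ, (∀ v, 0 ≤ t v) ∧
    (∀ C : Finset V, G.IsClique (C : Set V) → ∑ v ∈ C, t v ≤ 1) ∧ x = ∑ v, t v}

/-- The Lovász number. -/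
noncomputable def lovTheta (G : SimpleGraph V) [Fintype V] : ℝ :=
  sSup {x | ∃ B : Matrix V V ℝ, B.PosSemidef ∧ B.trace = 1 ∧
    (∀ v w, G.Adj v w → B v w = 0) ∧ x = ∑ v, ∑ w, B v w}

/-- Schrijver's variant of the Lovász number. -/
noncomputable def thetaMinus (G : SimpleGraph V) [Fintype V] : ℝ :=
  sSup {x | ∃ B : Matrix V V ℝ, B.PosSemidef ∧ B.trace = 1 ∧ (∀ v w, 0 ≤ B v w) ∧
    (∀ v w, G.Adj v w → B v w = 0) ∧ x = ∑ v, ∑ w, B v w}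

/-- Szegedy's variant of the Lovász number. -/
noncomputable def thetaPlus (G : SimpleGraph V) [Fintype V] : ℝ :=
  sSup {x | ∃ B : Matrix V V ℝ, B.PosSemidef ∧ B.trace = 1 ∧
    (∀ v w, G.Adj v w → B v w ≤ 0) ∧ x = ∑ v, ∑ w, B v w}

/-- The clique covering number. -/
noncomputable def cliqueCoverNum (G : SimpleGraph V) [Fintype V] : ℕ :=
  sInf {n | ∃ C : Fin n → Finset V, (∀ i, G.IsClique (C i : Set V)) ∧ ∀ v, ∃ i, v ∈ C i}

/-- The blow-up of a graph along integer vertex weights. -/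
def blup (G : SimpleGraph V) (p : V → ℕ) : SimpleGraph (Σ v, Fin (p v)) where
  Adj x y := G.Adj x.1 y.1
  symm := ⟨by rintro _ _ h; exact G.adj_symm h⟩
  loopless := ⟨by rintro x h; exact G.irrefl h⟩

/-- The weighted independence number (integer weights). -/
noncomputable def alphaWNat (G : SimpleGraph V) [Fintype V] (p : V → ℕ) : ℕ :=
  sSup {n | ∃ s : Finset V, G.IsIndep s ∧ n = ∑ v ∈ s, p v}

/-- The weighted independence number (real weights). -/
noncomputable def alphaW (G : SimpleGraph V) [Fintype V] (p : V → ℝ) : ℝ :=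
  sSup {x | ∃ s : Finset V, G.IsIndep s ∧ x = ∑ v ∈ s, p v}

end SimpleGraph

open SimpleGraph
open scoped RealInnerProductSpace

theorem hales_inequality {V W : Type*} [Fintype V] [Fintype W]
    (G : SimpleGraph V) (H : SimpleGraph W) :
    G.alphaStar * ((H.cliqueCoverNum : ℝ)) ≤ ((G.strongProd H).cliqueCoverNum : ℝ) := by
  classical
  set n := (G.strongProd H).cliqueCoverNum with hn
  set m := H.cliqueCoverNum with hm
  -- obtain an optimal clique cover of the strong product
  have hmem : n ∈ {k | ∃ C : Fin k → Finset (V × W),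
      (∀ i, (G.strongProd H).IsClique (C i : Set (V × W))) ∧ ∀ p, ∃ i, p ∈ C i} := by
    apply Nat.sInf_mem
    refine ⟨Fintype.card (V × W), fun i => {(Fintype.equivFin (V × W)).symm i}, ?_, ?_⟩
    · intro i x hx y hy hne
      simp only [Finset.coe_singleton, Set.mem_singleton_iff] at hx hy
      exact absurd (hx.trans hy.symm) hne
    · intro p; exact ⟨Fintype.equivFin _ p, by simp⟩
  obtain ⟨D, hDc, hDcov⟩ := hmem
  set F : V → Finset (Fin n) := fun v => Finset.univ.filter (fun i => ∃ w, (v, w) ∈ D i) with hF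
  set Gs : Fin n → Finset V := fun i => Finset.univ.filter (fun v => ∃ w, (v, w) ∈ D i) with hGs
  -- each F v gives m many cliques of H covering W
  have hFcard : ∀ v, m ≤ (F v).card := by
    intro v
    apply Nat.sInf_le
    set e := (F v).equivFin with he
    refine ⟨fun j => ((D (e.symm j).1).filter (fun p => p.1 = v)).image Prod.snd, ?_, ?_⟩
    · intro j
      intro w₁ hw₁ w₂ hw₂ hne
      simp only [Finset.coe_image, Set.mem_image, Finset.mem_coe, Finset.mem_filter] at hw₁ hw₂
      obtain ⟨p₁, ⟨hp₁, hp₁v⟩, hp₁w⟩ := hw₁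
      obtain ⟨p₂, ⟨hp₂, hp₂v⟩, hp₂w⟩ := hw₂
      have hpe₁ : p₁ = (v, w₁) := Prod.ext hp₁v hp₁w
      have hpe₂ : p₂ = (v, w₂) := Prod.ext hp₂v hp₂w
      subst hpe₁; subst hpe₂
      have hadj := hDc (e.symm j).1 (Finset.mem_coe.mpr hp₁) (Finset.mem_coe.mpr hp₂)
        (by simp [Prod.ext_iff, hne])
      rcases hadj.2.2 with h | h
      · exact absurd h hne
      · exact h
    · intro w
      obtain ⟨i, hi⟩ := hDcov (v, w)
      have hiF : i ∈ F v := by simp [hF]; exact ⟨w, hi⟩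
      refine ⟨e ⟨i, hiF⟩, ?_⟩
      simp only [Equiv.symm_apply_apply]
      exact Finset.mem_image.mpr ⟨(v, w), Finset.mem_filter.mpr ⟨hi, rfl⟩, rfl⟩
  -- each Gs i is a clique of G
  have hGsClique : ∀ i, G.IsClique (Gs i : Set V) := by
    intro i v₁ hv₁ v₂ hv₂ hne
    simp only [hGs, Finset.coe_filter, Set.mem_setOf_eq] at hv₁ hv₂
    obtain ⟨-, w₁, hw₁⟩ := hv₁
    obtain ⟨-, w₂, hw₂⟩ := hv₂
    have hadj := hDc i (Finset.mem_coe.mpr hw₁) (Finset.mem_coe.mpr hw₂)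
      (by simp [Prod.ext_iff]; intro h; exact absurd h hne)
    rcases hadj.2.1 with h | h
    · exact absurd h hne
    · exact h
  -- key counting inequality
  have key : ∀ x ∈ {x | ∃ t : V → ℝ, (∀ v, 0 ≤ t v) ∧
      (∀ C : Finset V, G.IsClique (C : Set V) → ∑ v ∈ C, t v ≤ 1) ∧ x = ∑ v, t v},
      x * m ≤ n := by
    rintro x ⟨t, ht0, htC, rfl⟩
    calc (∑ v, t v) * m = ∑ v, t v * m := by rw [Finset.sum_mul]
      _ ≤ ∑ v, t v * (F v).card := by
          refine Finset.sum_le_sum fun v _ => mul_le_mul_of_nonneg_left ?_ (ht0 v)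
          exact_mod_cast hFcard v
      _ = ∑ v, ∑ _i ∈ F v, t v := by
          refine Finset.sum_congr rfl fun v _ => ?_
          rw [Finset.sum_const, nsmul_eq_mul, mul_comm]
      _ = ∑ i : Fin n, ∑ v ∈ Gs i, t v := by
          refine Finset.sum_comm' ?_
          intro v i
          simp [hF, hGs]
      _ ≤ ∑ _i : Fin n, (1 : ℝ) := Finset.sum_le_sum fun i _ => htC (Gs i) (hGsClique i)
      _ = n := by simp
  -- conclude
  rw [SimpleGraph.alphaStar]
  rcases Nat.eq_zero_or_pos m with h0 | hpos
  · rw [h0]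
    simp only [Nat.cast_zero, mul_zero]
    exact Nat.cast_nonneg n
  · have hmR : (0 : ℝ) < m := by exact_mod_cast hpos
    have h1 : sSup {x | ∃ t : V → ℝ, (∀ v, 0 ≤ t v) ∧
        (∀ C : Finset V, G.IsClique (C : Set V) → ∑ v ∈ C, t v ≤ 1) ∧ x = ∑ v, t v}
        ≤ (n : ℝ) / m := by
      refine Real.sSup_le (fun x hx => ?_) (div_nonneg (Nat.cast_nonneg n) hmR.le)
      exact (le_div_iff₀ hmR).mpr (key x hx)
    calc sSup _ * (m : ℝ) ≤ ((n : ℝ) / m) * m := mul_le_mul_of_nonneg_right h1 hmR.le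
      _ = n := div_mul_cancel₀ _ hmR.ne'
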